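/- The query language of piece-wise linear warded sets of TGDs with conjunctive queries is strictly more expressive than piece-wise linear Datalog with respect to program expressive power: PWL-DATALOG <_pep (WARD ∩ PWL, CQ). -/

import Mathlib

/-! ### Core: terms, atoms, TGDs, CQs, certain answers -/

/-- Terms: constants ⊕ nulls ⊕ variables (each indexed by a natural number). -/
abbrev Term' : Type := ℕ ⊕ ℕ ⊕ ℕ

/-- The constant `n`. -/
def Term'.cst (n : ℕ) : Term' := Sum.inl n
/-- The labeled null `n`. -/
def Term'.nul (n : ℕ) : Term' := Sum.inr (Sum.inl n)
/-- The variable `n`. -/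
def Term'.var (n : ℕ) : Term' := Sum.inr (Sum.inr n)

def Term'.isVarB : Term' → Bool
  | Sum.inr (Sum.inr _) => true
  | _ => false

def Term'.isConstB : Term' → Bool
  | Sum.inl _ => true
  | _ => false

def Term'.isNullB : Term' → Bool
  | Sum.inr (Sum.inl _) => true
  | _ => false

/-- A (relational) atom: a predicate symbol together with a list of argument terms. -/
abbrev Atom : Type := ℕ × List Term'

/-- Apply a substitution to an atom. -/
def mapAtom (h : Term' → Term') (a : Atom) : Atom := (a.1, a.2.map h)

/-- A substitution is the identity on constants. -/
def constPres (h : Term' → Term') : Prop := ∀ n, h (Term'.cst n) = Term'.cst n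

/-- The variable `v` occurs in the set of atoms `A`. -/
def occursIn (A : Finset Atom) (v : ℕ) : Prop := ∃ a ∈ A, Term'.var v ∈ a.2

/-- A fact is an atom that contains only constants. -/
def isFact (a : Atom) : Prop := ∀ t ∈ a.2, Term'.isConstB t = true

/-- A tuple-generating dependency (TGD) `body → ∃ z̄ head`; the existentially
quantified variables are exactly the head variables not occurring in the body. -/
structure TGD where
  body : Finset Atom
  head : Finset Atom
deriving DecidableEq

/-- A TGD is well-formed if its body and head contain only variables
(no constants and no nulls). -/
def TGD.wf (σ : TGD) : Prop := ∀ a ∈ σ.body ∪ σ.head, ∀ t ∈ a.2, Term'.isVarB t = true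

/-- `v` is an existentially quantified variable of `σ`. -/
def isExistVar (σ : TGD) (v : ℕ) : Prop := occursIn σ.head v ∧ ¬ occursIn σ.body v

/-- An instance `I` (a set of atoms) satisfies a TGD: every homomorphism of the body
into `I` extends (on the body variables, in particular on the frontier) to a
homomorphism of the head into `I`. -/
def satTGD (I : Set Atom) (σ : TGD) : Prop :=
  ∀ h : Term' → Term', constPres h → (∀ a ∈ σ.body, mapAtom h a ∈ I) →
    ∃ h' : Term' → Term', constPres h' ∧
      (∀ v, occursIn σ.body v → h' (Term'.var v) = h (Term'.var v)) ∧
      (∀ a ∈ σ.head, mapAtom h' a ∈ I)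

/-- A conjunctive query: a tuple of output terms and a finite set of body atoms. -/
structure CQ where
  output : List Term'
  atoms : Finset Atom
deriving DecidableEq

/-- Well-formed CQ: no nulls in the atoms, and the output tuple consists of variables. -/
def CQ.wf (q : CQ) : Prop :=
  (∀ a ∈ q.atoms, ∀ t ∈ a.2, Term'.isNullB t = false) ∧
  (∀ t ∈ q.output, Term'.isVarB t = true)

/-- The evaluation `q(I)` of a CQ over an instance: all tuples of constants obtained as
homomorphic images of the output tuple. -/
def CQ.eval (q : CQ) (I : Set Atom) : Set (List ℕ) :=
  { c | ∃ h : Term' → Term', constPres h ∧ (∀ a ∈ q.atoms, mapAtom h a ∈ I) ∧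
        q.output.map h = c.map Term'.cst }

/-- The certain answers to `q` w.r.t. the database `D` and the set `S` of TGDs. -/
def cert (q : CQ) (D : Finset Atom) (S : Finset TGD) : Set (List ℕ) :=
  { c | ∀ I : Set Atom, ↑D ⊆ I → (∀ σ ∈ S, satTGD I σ) → c ∈ q.eval I }

/-- The active domain of a database: all constants occurring in it. -/
def adom (D : Finset Atom) : Set ℕ := { n | ∃ a ∈ D, Term'.cst n ∈ a.2 }

/-! ### Wardedness, piece-wise linearity, predicate levels -/

/-- The predicate `p` occurs in the set of atoms `A`. -/
def occursPredIn (A : Finset Atom) (p : ℕ) : Prop := ∃ a ∈ A, a.1 = p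

/-- The affected positions of (the schema of) `S`: `Affected S p i` says that the
`i`-th position of predicate `p` is affected. -/
inductive Affected (S : Finset TGD) : ℕ → ℕ → Prop
  | base (σ : TGD) (hσ : σ ∈ S) (v : ℕ) (hv : isExistVar σ v)
      (a : Atom) (ha : a ∈ σ.head) (i : ℕ) (hi : a.2[i]? = some (Term'.var v)) :
      Affected S a.1 i
  | step (σ : TGD) (hσ : σ ∈ S) (v : ℕ)
      (hb : occursIn σ.body v) (hh : occursIn σ.head v)
      (hall : ∀ b ∈ σ.body, ∀ j : ℕ, b.2[j]? = some (Term'.var v) → Affected S b.1 j)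
      (a : Atom) (ha : a ∈ σ.head) (i : ℕ) (hi : a.2[i]? = some (Term'.var v)) :
      Affected S a.1 i

/-- A body variable of `σ` is harmless if at least one of its occurrences in the body
is at a non-affected position. -/
def harmless (S : Finset TGD) (σ : TGD) (v : ℕ) : Prop :=
  ∃ b ∈ σ.body, ∃ i : ℕ, b.2[i]? = some (Term'.var v) ∧ ¬ Affected S b.1 i

/-- A body variable is dangerous if it is harmful (not harmless) and is a frontier
variable (it occurs in the head). -/
def dangerous (S : Finset TGD) (σ : TGD) (v : ℕ) : Prop :=
  occursIn σ.body v ∧ occursIn σ.head v ∧ ¬ harmless S σ v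

/-- `S` is warded: each TGD either has no dangerous body variables, or has a body atom
(a ward) containing all dangerous variables and sharing only harmless variables with
the rest of the body. -/
def Warded (S : Finset TGD) : Prop :=
  ∀ σ ∈ S, (∀ v, ¬ dangerous S σ v) ∨
    ∃ α ∈ σ.body, (∀ v, dangerous S σ v → Term'.var v ∈ α.2) ∧
      (∀ v, Term'.var v ∈ α.2 → occursIn (σ.body.erase α) v → harmless S σ v)

/-- Edge of the predicate graph of `S`. -/
def pgEdge (S : Finset TGD) (p r : ℕ) : Prop :=
  ∃ σ ∈ S, occursPredIn σ.body p ∧ occursPredIn σ.head r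

/-- Two predicates are mutually recursive if they lie on a common cycle of the
predicate graph. -/
def mutRec (S : Finset TGD) (p r : ℕ) : Prop :=
  Relation.TransGen (pgEdge S) p r ∧ Relation.TransGen (pgEdge S) r p

/-- `S` is piece-wise linear: each TGD has at most one body atom whose predicate is
mutually recursive with a predicate of its head. -/
def PWL (S : Finset TGD) : Prop :=
  ∀ σ ∈ S, ∀ α ∈ σ.body, ∀ β ∈ σ.body,
    (∃ γ ∈ σ.head, mutRec S α.1 γ.1) → (∃ γ ∈ σ.head, mutRec S β.1 γ.1) → α = β

/-- Every TGD of `S` has exactly one head atom. -/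
def singleHead (S : Finset TGD) : Prop := ∀ σ ∈ S, σ.head.card = 1

/-- The predicates occurring in `S` (as a set). -/
def schP (S : Finset TGD) : Set ℕ :=
  { p | ∃ σ ∈ S, occursPredIn σ.body p ∨ occursPredIn σ.head p }

/-- The predicates occurring in `S` (as a finite set). -/
def schF (S : Finset TGD) : Finset ℕ :=
  S.sup (fun σ => (σ.body ∪ σ.head).image (fun a => a.1))

/-- `lvl` is the (unique) level function of `S`:
`lvl p = max { lvl r | (r,p) an edge of the predicate graph, r not mutually recursive
with p } + 1` (with `max ∅ = 0`). -/
def IsLevelFn (S : Finset TGD) (lvl : ℕ → ℕ) : Prop :=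
  ∀ p ∈ schP S,
    (∀ r, pgEdge S r p → ¬ mutRec S r p → lvl r < lvl p) ∧
    (lvl p = 1 ∨ ∃ r, pgEdge S r p ∧ ¬ mutRec S r p ∧ lvl p = lvl r + 1)

/-- The maximal body size of a TGD of `S`. -/
def maxBody (S : Finset TGD) : ℕ := S.sup (fun σ => σ.body.card)

/-- `f_{WARD∩PWL}(n, S) = (n+1) · max_{P ∈ sch(S)} level(P) · max_{σ ∈ S} |body(σ)|`,
where `n` is the number of atoms of the CQ (resp. the cardinality of the atom set). -/
def fWardPwl (n : ℕ) (S : Finset TGD) (lvl : ℕ → ℕ) : ℕ :=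
  (n + 1) * (schF S).sup lvl * maxBody S

/-- `f_{WARD}(n, S) = 2 · max (n, max_{σ ∈ S} |body(σ)|)`. -/
def fWard (n : ℕ) (S : Finset TGD) : ℕ := 2 * max n (maxBody S)

/-! ### Query languages and expressive power -/

/-- The extensional (database) schema of `S`: the predicates of `sch(S)` not occurring
in any head of `S`. -/
def edbP (S : Finset TGD) : Set ℕ :=
  { p | p ∈ schP S ∧ ∀ σ ∈ S, ¬ occursPredIn σ.head p }

/-- The database `D` is over the set `E` of predicates (and consists of facts). -/
def DBover (D : Finset Atom) (E : Set ℕ) : Prop :=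
  (∀ a ∈ D, isFact a) ∧ (∀ a ∈ D, a.1 ∈ E)

/-- The CQ `q` is over the set `P` of predicates. -/
def CQover (q : CQ) (P : Set ℕ) : Prop := ∀ a ∈ q.atoms, a.1 ∈ P

/-- A query: a (finite) set of TGDs together with a CQ. -/
abbrev Query : Type := Finset TGD × CQ

/-- A well-formed query: the TGDs contain only variables, the CQ is well-formed and
over the schema of the TGDs. -/
def wfQuery (Q : Query) : Prop :=
  (∀ σ ∈ Q.1, TGD.wf σ) ∧ CQ.wf Q.2 ∧ CQover Q.2 (schP Q.1)

/-- The (combined) expressive power of a query `Q = (Σ, q)`: all pairs `(D, c̄)` with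
`D` a database over `edb(Σ)` and `c̄ ∈ adom(D)^{|x̄|}` a certain answer. -/
def ep (Q : Query) : Set (Finset Atom × List ℕ) :=
  { Dc | DBover Dc.1 (edbP Q.1) ∧ Dc.2.length = Q.2.output.length ∧
         (∀ n ∈ Dc.2, n ∈ adom Dc.1) ∧ Dc.2 ∈ cert Q.2 Dc.1 Q.1 }

/-- The combined expressive power of a query language. -/
def cep (L : Set Query) : Set (Set (Finset Atom × List ℕ)) := ep '' L

/-- `L1 ≤_cep L2`. -/
def cepLE (L1 L2 : Set Query) : Prop := cep L1 ⊆ cep L2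

/-- `Q` and `Q'` are equivalent: they evaluate to the same certain answers on every
database over the common extensional schema. -/
def queryEquivOn (Q Q' : Query) : Prop :=
  ∀ D : Finset Atom, DBover D (edbP Q.1 ∩ edbP Q'.1) → cert Q.2 D Q.1 = cert Q'.2 D Q'.1

/-- `L1 ⪯ L2`: every query of `L1` can be equivalently rewritten as a query of `L2`. -/
def langLE (L1 L2 : Set Query) : Prop := ∀ Q ∈ L1, ∃ Q' ∈ L2, queryEquivOn Q Q'

/-- The class of sets of full single-head TGDs (Datalog programs). -/
def FULL1 : Set (Finset TGD) :=
  { S | (∀ σ ∈ S, TGD.wf σ) ∧ ∀ σ ∈ S, σ.head.card = 1 ∧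
        ∀ v, occursIn σ.head v → occursIn σ.body v }

/-- The class of warded sets of TGDs. -/
def WARDc : Set (Finset TGD) := { S | (∀ σ ∈ S, TGD.wf σ) ∧ Warded S }

/-- The class of piece-wise linear sets of TGDs. -/
def PWLc : Set (Finset TGD) := { S | (∀ σ ∈ S, TGD.wf σ) ∧ PWL S }

/-- The query language `(C, CQ)` based on a class `C` of sets of TGDs. -/
def langOf (C : Set (Finset TGD)) : Set Query :=
  { Q | Q.1 ∈ C ∧ CQ.wf Q.2 ∧ CQover Q.2 (schP Q.1) }

/-- The (program) expressive power of a set `S` of TGDs: all triples `(D, q, c̄)` with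
`D` a database over `edb(S)`, `q` a CQ over `sch(S)`, and `c̄ ∈ adom(D)^{|x̄|}` a
certain answer. -/
def epP (S : Finset TGD) : Set (Finset Atom × CQ × List ℕ) :=
  { x | DBover x.1 (edbP S) ∧ CQ.wf x.2.1 ∧ CQover x.2.1 (schP S) ∧
        x.2.2.length = x.2.1.output.length ∧ (∀ n ∈ x.2.2, n ∈ adom x.1) ∧
        x.2.2 ∈ cert x.2.1 x.1 S }

/-- The program expressive power of the query language `(C, CQ)`. -/
def pep (C : Set (Finset TGD)) : Set (Set (Finset Atom × CQ × List ℕ)) := epP '' C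

/-- `(C1, CQ) ≤_pep (C2, CQ)`. -/
def pepLE (C1 C2 : Set (Finset TGD)) : Prop := pep C1 ⊆ pep C2

/-- `C1 ⪯ C2` for classes of TGDs: every `Σ ∈ C1` can be rewritten into some
`Σ' ∈ C2` giving the same certain answers for all databases over the common
extensional schema and all CQs over the common schema. -/
def classLE (C1 C2 : Set (Finset TGD)) : Prop :=
  ∀ S ∈ C1, ∃ S' ∈ C2, ∀ (D : Finset Atom) (q : CQ),
    DBover D (edbP S ∩ edbP S') → CQ.wf q → CQover q (schP S ∩ schP S') →
    cert q D S = cert q D S'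

namespace Sep14

/-- A canonical substitution mapping every non-constant to the constant 0. -/
def hcst : Term' → Term' := fun t => match t with
  | Sum.inl n => Sum.inl n
  | _ => Term'.cst 0

lemma hcst_cp : constPres hcst := fun _ => rfl

/-- In a program whose head variables all occur in bodies, nothing is affected. -/
lemma noAffected (S : Finset TGD)
    (hS : ∀ σ ∈ S, ∀ v, occursIn σ.head v → occursIn σ.body v) :
    ∀ p i, ¬ Affected S p i := by
  intro p i h
  induction h with
  | base σ hσ v hv a ha i hi => exact hv.2 (hS σ hσ v hv.1)
  | step σ hσ v hb hh hall a ha i hi ih =>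
      obtain ⟨b, hbB, hvb⟩ := hb
      obtain ⟨j, hj⟩ := List.mem_iff_getElem?.mp hvb
      exact ih b hbB j hj

lemma datalogWarded (S : Finset TGD)
    (hS : ∀ σ ∈ S, ∀ v, occursIn σ.head v → occursIn σ.body v) :
    Warded S := by
  intro σ hσ
  left
  rintro v ⟨hb, hh, hnh⟩
  obtain ⟨b, hbB, hvb⟩ := hb
  obtain ⟨j, hj⟩ := List.mem_iff_getElem?.mp hvb
  exact hnh ⟨b, hbB, j, hj, noAffected S hS b.1 j⟩

/-! ### The separating program -/

def σ0 : TGD := ⟨{(1, [Term'.var 0])}, {(2, [Term'.var 0, Term'.var 1])}⟩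
def S0 : Finset TGD := {σ0}
def D0 : Finset Atom := {(1, [Term'.cst 0])}
def q2 : CQ := ⟨[Term'.var 0], {(2, [Term'.var 0, Term'.var 1])}⟩
def q3 : CQ := ⟨[Term'.var 0, Term'.var 1], {(2, [Term'.var 0, Term'.var 1])}⟩

lemma S0_wf : ∀ σ ∈ S0, TGD.wf σ := by
  intro σ hσ
  simp only [S0, Finset.mem_singleton] at hσ
  subst hσ
  intro a ha t ht
  simp only [σ0, Finset.union_insert, Finset.mem_insert, Finset.mem_union,
    Finset.mem_singleton] at ha
  rcases ha with h | h <;> subst h <;> simp_all [Term'.var, Term'.isVarB] <;>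
    rcases ht with h | h <;> subst h <;> rfl

lemma S0_aff_pred {p i : ℕ} (h : Affected S0 p i) : p = 2 := by
  induction h with
  | base σ hσ v hv a ha i hi =>
      simp only [S0, Finset.mem_singleton] at hσ
      subst hσ
      simp only [σ0, Finset.mem_singleton] at ha
      rw [ha]
  | step σ hσ v hb hh hall a ha i hi ih =>
      simp only [S0, Finset.mem_singleton] at hσ
      subst hσ
      simp only [σ0, Finset.mem_singleton] at ha
      rw [ha]

lemma S0_notAff : ∀ i, ¬ Affected S0 1 i := fun i h => by
  have := S0_aff_pred h
  omega

lemma S0_warded : Warded S0 := by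
  intro σ hσ
  left
  rintro v ⟨hb, hh, hnh⟩
  simp only [S0, Finset.mem_singleton] at hσ
  subst hσ
  obtain ⟨b, hbB, hvb⟩ := hb
  simp only [σ0, Finset.mem_singleton] at hbB
  obtain ⟨j, hj⟩ := List.mem_iff_getElem?.mp hvb
  refine hnh ⟨b, by simp [σ0, hbB], j, hj, ?_⟩
  rw [hbB]
  exact S0_notAff j

lemma S0_pwl : PWL S0 := by
  intro σ hσ α hα β hβ _ _
  simp only [S0, Finset.mem_singleton] at hσ
  subst hσ
  simp only [σ0, Finset.mem_singleton] at hα hβ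
  rw [hα, hβ]

lemma one_mem_edbP : (1 : ℕ) ∈ edbP S0 := by
  constructor
  · exact ⟨σ0, by simp [S0], Or.inl ⟨(1, [Term'.var 0]), by simp [σ0], rfl⟩⟩
  · intro σ hσ h
    simp only [S0, Finset.mem_singleton] at hσ
    subst hσ
    obtain ⟨a, ha, hp⟩ := h
    simp only [σ0, Finset.mem_singleton] at ha
    rw [ha] at hp
    exact absurd hp (by norm_num)

lemma DB0 : DBover D0 (edbP S0) := by
  constructor
  · intro a ha
    simp only [D0, Finset.mem_singleton] at ha
    subst ha
    intro t ht
    simp only [List.mem_singleton] at ht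
    subst ht; rfl
  · intro a ha
    simp only [D0, Finset.mem_singleton] at ha
    subst ha
    exact one_mem_edbP

lemma q2_wf : CQ.wf q2 := by
  constructor
  · intro a ha t ht
    simp only [q2, Finset.mem_singleton] at ha
    subst ha
    simp only [List.mem_cons, List.mem_singleton, List.not_mem_nil] at ht
    rcases ht with h | h | h <;> first | (subst h; rfl) | exact h.elim
  · intro t ht
    simp only [q2, List.mem_singleton] at ht
    subst ht; rfl

lemma q3_wf : CQ.wf q3 := by
  constructor
  · intro a ha t ht
    simp only [q3, Finset.mem_singleton] at ha
    subst ha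
    simp only [List.mem_cons, List.mem_singleton, List.not_mem_nil] at ht
    rcases ht with h | h | h <;> first | (subst h; rfl) | exact h.elim
  · intro t ht
    simp only [q3, List.mem_cons, List.mem_singleton, List.not_mem_nil] at ht
    rcases ht with h | h | h <;> first | (subst h; rfl) | exact h.elim

lemma occ0 : occursIn σ0.body 0 :=
  ⟨(1, [Term'.var 0]), by simp [σ0], by simp⟩

/-- (A) certain answer part: [0] ∈ cert q2 D0 S0. -/
lemma certA : [0] ∈ cert q2 D0 S0 := by
  intro I hD hsat
  have hb : mapAtom hcst (1, [Term'.var 0]) ∈ I := by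
    have : mapAtom hcst (1, [Term'.var 0]) = (1, [Term'.cst 0]) := rfl
    rw [this]
    exact hD (by simp [D0])
  obtain ⟨h', hcp, hag, hhd⟩ := hsat σ0 (by simp [S0]) hcst hcst_cp
    (by intro a ha; simp only [σ0, Finset.mem_singleton] at ha; subst ha; exact hb)
  refine ⟨h', hcp, ?_, ?_⟩
  · intro a ha
    simp only [q2, Finset.mem_singleton] at ha
    subst ha
    exact hhd _ (by simp [σ0])
  · have h0 : h' (Term'.var 0) = Term'.cst 0 := hag 0 occ0
    simp [q2, h0]

/-- Counter-model for (B). -/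
def I1 : Set Atom := {(1, [Term'.cst 0]), (2, [Term'.cst 0, Term'.nul 0])}

lemma I1_sat : ∀ σ ∈ S0, satTGD I1 σ := by
  intro σ hσ h hcp hbody
  simp only [S0, Finset.mem_singleton] at hσ
  subst hσ
  have hb : mapAtom h (1, [Term'.var 0]) ∈ I1 := hbody _ (by simp [σ0])
  have hx : h (Term'.var 0) = Term'.cst 0 := by
    simp only [I1, mapAtom, Set.mem_insert_iff, Set.mem_singleton_iff, Prod.mk.injEq,
      List.map_cons, List.map_nil] at hb
    rcases hb with ⟨_, h2⟩ | ⟨h1, _⟩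
    · exact (List.cons_eq_cons.mp h2).1
    · omega
  refine ⟨fun t => if t = Term'.var 1 then Term'.nul 0 else h t, ?_, ?_, ?_⟩
  · intro n
    show (if Term'.cst n = Term'.var 1 then Term'.nul 0 else h (Term'.cst n)) = Term'.cst n
    rw [if_neg (by simp [Term'.cst, Term'.var]), hcp n]
  · intro v hv
    obtain ⟨b, hbB, hvb⟩ := hv
    simp only [σ0, Finset.mem_singleton] at hbB
    subst hbB
    simp only [List.mem_singleton] at hvb
    have : v = 0 := by
      simpa [Term'.var] using hvb
    subst this
    show (if Term'.var 0 = Term'.var 1 then Term'.nul 0 else h (Term'.var 0)) = h (Term'.var 0)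
    rw [if_neg (by decide)]
  · intro a ha
    simp only [σ0, Finset.mem_singleton] at ha
    subst ha
    have : mapAtom (fun t => if t = Term'.var 1 then Term'.nul 0 else h t)
        (2, [Term'.var 0, Term'.var 1]) = (2, [Term'.cst 0, Term'.nul 0]) := by
      show ((2 : ℕ), [if Term'.var 0 = Term'.var 1 then Term'.nul 0 else h (Term'.var 0),
        if Term'.var 1 = Term'.var 1 then Term'.nul 0 else h (Term'.var 1)])
          = ((2 : ℕ), [Term'.cst 0, Term'.nul 0])
      rw [if_neg (by decide), if_pos rfl, hx]
    rw [this]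
    simp [I1]

/-- (B): [0,0] is not a certain answer of q3. -/
lemma certB : [0, 0] ∉ cert q3 D0 S0 := by
  intro hc
  obtain ⟨h, hcp, hat, hout⟩ := hc I1 (by
      intro a ha
      simp only [D0, Finset.coe_singleton, Set.mem_singleton_iff] at ha
      subst ha
      simp [I1]) I1_sat
  have hmem : mapAtom h (2, [Term'.var 0, Term'.var 1]) ∈ I1 := hat _ (by simp [q3])
  simp only [q3, List.map_cons, List.map_nil] at hout
  have h0 : h (Term'.var 0) = Term'.cst 0 := (List.cons_eq_cons.mp hout).1
  have h1 : h (Term'.var 1) = Term'.cst 0 :=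
    (List.cons_eq_cons.mp (List.cons_eq_cons.mp hout).2).1
  simp only [I1, mapAtom, List.map_cons, List.map_nil, Set.mem_insert_iff,
    Set.mem_singleton_iff, Prod.mk.injEq, h0, h1] at hmem
  rcases hmem with ⟨h1, _⟩ | ⟨_, h2⟩
  · omega
  · have := (List.cons_eq_cons.mp (List.cons_eq_cons.mp h2).2).1
    simp [Term'.cst, Term'.nul] at this

/-- (A): the full epP membership. -/
lemma memA : (D0, q2, [0]) ∈ epP S0 := by
  refine ⟨DB0, q2_wf, ?_, rfl, ?_, certA⟩
  · intro a ha
    simp only [q2, Finset.mem_singleton] at ha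
    subst ha
    exact ⟨σ0, by simp [S0], Or.inr ⟨(2, [Term'.var 0, Term'.var 1]), by simp [σ0], rfl⟩⟩
  · intro n hn
    simp only [List.mem_singleton] at hn
    subst hn
    exact ⟨(1, [Term'.cst 0]), by simp [D0], by simp⟩

/-! ### The chase / least model for Datalog -/

inductive Reach (S : Finset TGD) (D : Finset Atom) : Atom → Prop
  | base {a : Atom} : a ∈ D → Reach S D a
  | step (σ : TGD) (hσ : σ ∈ S) (h : Term' → Term') (hc : constPres h)
      (hb : ∀ a ∈ σ.body, Reach S D (mapAtom h a)) (a : Atom) (ha : a ∈ σ.head) :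
      Reach S D (mapAtom h a)

lemma Reach_model (S : Finset TGD) (D : Finset Atom) :
    ↑D ⊆ {a | Reach S D a} ∧ ∀ σ ∈ S, satTGD {a | Reach S D a} σ := by
  refine ⟨fun a ha => Reach.base ha, ?_⟩
  intro σ hσ h hcp hbody
  exact ⟨h, hcp, fun v _ => rfl, fun a ha => Reach.step σ hσ h hcp hbody a ha⟩

lemma Reach_min (S : Finset TGD) (D : Finset Atom)
    (hwf : ∀ σ ∈ S, TGD.wf σ)
    (hfull : ∀ σ ∈ S, ∀ v, occursIn σ.head v → occursIn σ.body v)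
    (I : Set Atom) (hD : ↑D ⊆ I) (hsat : ∀ σ ∈ S, satTGD I σ) :
    ∀ a, Reach S D a → a ∈ I := by
  intro a hr
  induction hr with
  | base h => exact hD h
  | step σ hσ h hc hb a ha ih =>
      obtain ⟨h', hcp', hag, hhd⟩ := hsat σ hσ h hc ih
      have : mapAtom h' a = mapAtom h a := by
        unfold mapAtom
        refine congrArg _ (List.map_congr_left ?_)
        intro t ht
        have hv : Term'.isVarB t = true :=
          hwf σ hσ a (Finset.mem_union_right _ ha) t ht
        obtain ⟨v, rfl⟩ : ∃ v, t = Term'.var v := by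
          rcases t with n | n | n
          · exact absurd hv (by simp [Term'.isVarB])
          · exact absurd hv (by simp [Term'.isVarB])
          · exact ⟨n, rfl⟩
        exact hag v (hfull σ hσ v ⟨a, ha, ht⟩)
      rw [← this]
      exact hhd a ha

lemma Reach_const (S : Finset TGD) (hwf : ∀ σ ∈ S, TGD.wf σ)
    (hfull : ∀ σ ∈ S, ∀ v, occursIn σ.head v → occursIn σ.body v) :
    ∀ a, Reach S D0 a → ∀ t ∈ a.2, t = Term'.cst 0 := by
  intro a hr
  induction hr with
  | base h =>
      simp only [D0, Finset.mem_singleton] at h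
      subst h
      intro t ht
      simpa using ht
  | step σ hσ h hc hb a ha ih =>
      intro t ht
      simp only [mapAtom, List.mem_map] at ht
      obtain ⟨u, hu, rfl⟩ := ht
      have hv : Term'.isVarB u = true :=
        hwf σ hσ a (Finset.mem_union_right _ ha) u hu
      obtain ⟨v, rfl⟩ : ∃ v, u = Term'.var v := by
        rcases u with n | n | n
        · exact absurd hv (by simp [Term'.isVarB])
        · exact absurd hv (by simp [Term'.isVarB])
        · exact ⟨n, rfl⟩
      obtain ⟨b, hbB, hvb⟩ := hfull σ hσ v ⟨a, ha, hu⟩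
      exact ih b hbB (h (Term'.var v)) (List.mem_map_of_mem (f := h) hvb)

end Sep14

/-- `PWL-DATALOG <_pep (WARD ∩ PWL, CQ)`. -/
theorem pwl_datalog_lt_pep_warded_pwl :
    pepLE (FULL1 ∩ PWLc) (WARDc ∩ PWLc) ∧ ¬ pepLE (WARDc ∩ PWLc) (FULL1 ∩ PWLc) := by
  constructor
  · rintro X ⟨S, ⟨hF, hP⟩, rfl⟩
    exact ⟨S, ⟨⟨hF.1, Sep14.datalogWarded S (fun σ hσ => (hF.2 σ hσ).2)⟩, hP⟩, rfl⟩
  · intro hle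
    have hmem : epP Sep14.S0 ∈ pep (WARDc ∩ PWLc) :=
      ⟨Sep14.S0, ⟨⟨Sep14.S0_wf, Sep14.S0_warded⟩, ⟨Sep14.S0_wf, Sep14.S0_pwl⟩⟩, rfl⟩
    obtain ⟨S', ⟨hF', hP'⟩, hEq⟩ := hle hmem
    have hwf' : ∀ σ ∈ S', TGD.wf σ := hF'.1
    have hfull' : ∀ σ ∈ S', ∀ v, occursIn σ.head v → occursIn σ.body v :=
      fun σ hσ => (hF'.2 σ hσ).2
    have hA' : (Sep14.D0, Sep14.q2, [0]) ∈ epP S' := by rw [hEq]; exact Sep14.memA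
    obtain ⟨hDB', _, hcov2, _, _, hcert2⟩ := hA'
    obtain ⟨hDM, hsatM⟩ := Sep14.Reach_model S' Sep14.D0
    obtain ⟨h, hcp, hat, hout⟩ := hcert2 {a | Sep14.Reach S' Sep14.D0 a} hDM hsatM
    have hr : Sep14.Reach S' Sep14.D0 (mapAtom h (2, [Term'.var 0, Term'.var 1])) :=
      hat _ (by simp [Sep14.q2])
    have hconst := Sep14.Reach_const S' hwf' hfull' _ hr
    have h0 : h (Term'.var 0) = Term'.cst 0 := hconst _ (by simp [mapAtom])
    have h1 : h (Term'.var 1) = Term'.cst 0 := hconst _ (by simp [mapAtom])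
    have hRR : Sep14.Reach S' Sep14.D0 (2, [Term'.cst 0, Term'.cst 0]) := by
      have he : mapAtom h (2, [Term'.var 0, Term'.var 1])
          = (2, [Term'.cst 0, Term'.cst 0]) := by
        simp [mapAtom, h0, h1]
      rwa [he] at hr
    have hcert3 : [0, 0] ∈ cert Sep14.q3 Sep14.D0 S' := by
      intro I hD hsat
      have hin : (2, [Term'.cst 0, Term'.cst 0]) ∈ I :=
        Sep14.Reach_min S' Sep14.D0 hwf' hfull' I hD hsat _ hRR
      refine ⟨Sep14.hcst, Sep14.hcst_cp, ?_, rfl⟩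
      intro a ha
      simp only [Sep14.q3, Finset.mem_singleton] at ha
      subst ha
      exact hin
    have hB' : (Sep14.D0, Sep14.q3, [0, 0]) ∈ epP S' := by
      refine ⟨hDB', Sep14.q3_wf, ?_, rfl, ?_, hcert3⟩
      · intro a ha
        simp only [Sep14.q3, Finset.mem_singleton] at ha
        subst ha
        exact hcov2 _ (by simp [Sep14.q2])
      · intro n hn
        simp only [List.mem_cons, List.not_mem_nil, or_false] at hn
        rcases hn with rfl | rfl <;>
          exact ⟨(1, [Term'.cst 0]), by simp [Sep14.D0], by simp⟩
    rw [hEq] at hB'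
    exact Sep14.certB hB'.2.2.2.2.2
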